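/- arXiv:2601.21445 — 11 statements merged into one kernel-verified Lean document; each statement's English description precedes it below -/
import Mathlib

section
/- Let X = {(a,b) ∈ ℕ⁺ × ℕ⁺ : a*b divides a² + b² + 1}. Then X equals the set of pairs (F(2n-1), F(2n+1)) for n ∈ ℤ, where F is the Fibonacci sequence extended to all integers. -/
/-- Positivity for positive indices. -/
lemma fibP_pos (F : ℤ → ℤ) (hF0 : F 0 = 0) (hF1 : F 1 = 1)
    (hrec : ∀ n : ℤ, F (n + 1) = F n + F (n - 1)) :
    ∀ m : ℤ, 1 ≤ m → 1 ≤ F m ∧ 0 ≤ F (m - 1) := by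
  intro m hm
  refine Int.le_induction (motive := fun m _ => 1 ≤ F m ∧ 0 ≤ F (m - 1)) ?_ ?_ m hm
  · norm_num [hF0, hF1]
  · intro n hn ih
    have h := hrec n
    constructor
    · linarith [ih.1, ih.2]
    · have h2 : n + 1 - 1 = n := by ring
      rw [h2]; linarith [ih.1]

/-- The "flip" step for Cassini. -/
lemma fibP_flip (F : ℤ → ℤ)
    (hrec : ∀ n : ℤ, F (n + 1) = F n + F (n - 1)) :
    ∀ m : ℤ, F m * F (m + 2) - F (m + 1) ^ 2 = -(F (m - 1) * F (m + 1) - F m ^ 2) := by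
  intro m
  have h1 := hrec (m + 1)
  have h2 := hrec m
  rw [show m + 1 + 1 = m + 2 by ring, show m + 1 - 1 = m by ring] at h1
  have h2' : F (m - 1) = F (m + 1) - F m := by linarith
  rw [h1, h2']; ring

/-- Cassini identity at odd indices. -/
lemma fibP_cassini (F : ℤ → ℤ) (hF0 : F 0 = 0) (hF1 : F 1 = 1)
    (hrec : ∀ n : ℤ, F (n + 1) = F n + F (n - 1)) :
    ∀ n : ℤ, F (2 * n - 1) * F (2 * n + 1) = F (2 * n) ^ 2 + 1 := by
  intro n
  induction n using Int.induction_on with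
  | zero =>
    have h := hrec 0
    norm_num [hF0, hF1] at h ⊢
    omega
  | succ k ih =>
    have f1 := fibP_flip F hrec (2 * (k : ℤ))
    have f2 := fibP_flip F hrec (2 * (k : ℤ) + 1)
    ring_nf at f1 f2 ih ⊢
    linarith
  | pred k ih =>
    have f1 := fibP_flip F hrec (-2 * (k : ℤ) - 2)
    have f2 := fibP_flip F hrec (-2 * (k : ℤ) - 1)
    ring_nf at f1 f2 ih ⊢
    linarith

/-- F(1-2n) = F(2n-1) and F(-2n) = -F(2n). -/
lemma fibP_neg (F : ℤ → ℤ) (hF0 : F 0 = 0) (hF1 : F 1 = 1)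
    (hrec : ∀ n : ℤ, F (n + 1) = F n + F (n - 1)) :
    ∀ n : ℤ, F (1 - 2 * n) = F (2 * n - 1) ∧ F (-(2 * n)) = -F (2 * n) := by
  intro n
  induction n using Int.induction_on with
  | zero =>
    have h := hrec 0
    norm_num [hF0, hF1] at h ⊢
    omega
  | succ k ih =>
    obtain ⟨i1, i2⟩ := ih
    have h1 := hrec (-2 * (k : ℤ))
    have h2 := hrec (-2 * (k : ℤ) - 1)
    have h3 := hrec (2 * (k : ℤ))
    have h4 := hrec (2 * (k : ℤ) + 1)
    ring_nf at i1 i2 h1 h2 h3 h4 ⊢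
    constructor <;> linarith
  | pred k ih =>
    obtain ⟨i1, i2⟩ := ih
    have h1 := hrec (1 + 2 * (k : ℤ))
    have h2 := hrec (2 + 2 * (k : ℤ))
    have h3 := hrec (-2 * (k : ℤ) - 1)
    have h4 := hrec (-2 * (k : ℤ) - 2)
    ring_nf at i1 i2 h1 h2 h3 h4 ⊢
    constructor <;> linarith

/-- The Markov-like identity at consecutive odd indices. -/
lemma fibP_ident (F : ℤ → ℤ) (hF0 : F 0 = 0) (hF1 : F 1 = 1)
    (hrec : ∀ n : ℤ, F (n + 1) = F n + F (n - 1)) (n : ℤ) :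
    F (2 * n - 1) ^ 2 + F (2 * n + 1) ^ 2 + 1 = 3 * (F (2 * n - 1) * F (2 * n + 1)) := by
  have hc := fibP_cassini F hF0 hF1 hrec n
  have h := hrec (2 * n)
  have h' : F (2 * n) = F (2 * n + 1) - F (2 * n - 1) := by linarith
  rw [h'] at hc
  linear_combination -hc

/-- Positivity at odd indices. -/
lemma fibP_pos_odd (F : ℤ → ℤ) (hF0 : F 0 = 0) (hF1 : F 1 = 1)
    (hrec : ∀ n : ℤ, F (n + 1) = F n + F (n - 1)) (n : ℤ) :
    0 < F (2 * n - 1) := by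
  rcases le_or_gt 1 n with h | h
  · have := (fibP_pos F hF0 hF1 hrec (2 * n - 1) (by linarith)).1
    linarith
  · have hneg := (fibP_neg F hF0 hF1 hrec n).1
    have := (fibP_pos F hF0 hF1 hrec (1 - 2 * n) (by linarith)).1
    linarith

/-- The jump relation: F(2m+3) = 3 F(2m+1) - F(2m-1). -/
lemma fibP_jump (F : ℤ → ℤ)
    (hrec : ∀ n : ℤ, F (n + 1) = F n + F (n - 1)) (m : ℤ) :
    F (2 * m + 3) = 3 * F (2 * m + 1) - F (2 * m - 1) := by
  have h1 := hrec (2 * m + 2)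
  have h2 := hrec (2 * m + 1)
  have h3 := hrec (2 * m)
  ring_nf at h1 h2 h3 ⊢
  linarith

/-- The descent. -/
lemma fibP_descent (F : ℤ → ℤ) (hF0 : F 0 = 0) (hF1 : F 1 = 1)
    (hrec : ∀ n : ℤ, F (n + 1) = F n + F (n - 1)) :
    ∀ N : ℕ, ∀ a b : ℤ, a + b ≤ N → 0 < a → 0 < b → a * b ∣ a ^ 2 + b ^ 2 + 1 →
      ∃ n : ℤ, a = F (2 * n - 1) ∧ b = F (2 * n + 1) := by
  intro N
  induction N with
  | zero => intro a b hab ha hb _; exfalso; omega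
  | succ N ih =>
    have aux : ∀ a b : ℤ, a + b ≤ (N + 1 : ℕ) → 0 < a → 0 < b → a ≤ b →
        a * b ∣ a ^ 2 + b ^ 2 + 1 → ∃ n : ℤ, a = F (2 * n - 1) ∧ b = F (2 * n + 1) := by
      intro a b hab ha hb hle hd
      rcases eq_or_lt_of_le hle with heq | hlt
      · -- a = b forces a = b = 1
        subst heq
        have h1 : a * a ∣ 1 := by
          have h2 : a * a ∣ a ^ 2 + a ^ 2 := ⟨2, by ring⟩
          have := dvd_sub hd h2
          simpa using this
        have ha1 : a = 1 := by
          have := Int.le_of_dvd one_pos h1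
          nlinarith
        subst ha1
        refine ⟨0, ?_, ?_⟩
        · have h := hrec 0
          norm_num [hF0, hF1] at h ⊢
          omega
        · norm_num [hF1]
      · -- a < b : Vieta jump down
        obtain ⟨k, hk⟩ := hd
        set c := a * k - b with hcdef
        have hbc : b * c = a ^ 2 + 1 := by rw [hcdef]; linear_combination -hk
        have hc0 : 0 < c := by nlinarith
        have hca : c ≤ a := by nlinarith
        have hd' : c * a ∣ c ^ 2 + a ^ 2 + 1 := ⟨k, by rw [hcdef]; linear_combination hk⟩
        obtain ⟨m, hm1, hm2⟩ := ih c a (by omega) hc0 ha hd'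
        have hid := fibP_ident F hF0 hF1 hrec m
        have hk3 : k = 3 := by
          have hpos : (0 : ℤ) < c * a := mul_pos hc0 ha
          have heqk : c * a * k = c * a * 3 := by
            have : c ^ 2 + a ^ 2 + 1 = c * a * k := by rw [hcdef]; linear_combination hk
            nlinarith [hid, hm1, hm2]
          exact mul_left_cancel₀ hpos.ne' heqk
        refine ⟨m + 1, ?_, ?_⟩
        · rw [show 2 * (m + 1) - 1 = 2 * m + 1 by ring]; exact hm2
        · have hj := fibP_jump F hrec m
          rw [show 2 * (m + 1) + 1 = 2 * m + 3 by ring, hj]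
          have hb3 : b = 3 * a - c := by rw [hcdef, hk3]; ring
          rw [hb3, hm1, hm2]
    intro a b hab ha hb hd
    rcases le_or_gt a b with hle | hlt
    · exact aux a b hab ha hb hle hd
    · obtain ⟨n, hn1, hn2⟩ := aux b a (by omega) hb ha hlt.le
        (by rw [mul_comm]; convert hd using 1; ring)
      refine ⟨-n, ?_, ?_⟩
      · have h := (fibP_neg F hF0 hF1 hrec (n + 1)).1
        rw [show 2 * (-n) - 1 = 1 - 2 * (n + 1) by ring, h,
          show 2 * (n + 1) - 1 = 2 * n + 1 by ring]
        exact hn2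
      · have h := (fibP_neg F hF0 hF1 hrec n).1
        rw [show 2 * (-n) + 1 = 1 - 2 * n by ring, h]
        exact hn1

/-- X = {(a,b) ∈ ℕ⁺ × ℕ⁺ : a*b ∣ a² + b² + 1} equals
{(F(2n-1), F(2n+1)) : n ∈ ℤ} for the Fibonacci sequence F extended to ℤ. -/
theorem markov_like_set_eq_fib
    (F : ℤ → ℤ) (hF0 : F 0 = 0) (hF1 : F 1 = 1)
    (hrec : ∀ n : ℤ, F (n + 1) = F n + F (n - 1)) :
    {p : ℤ × ℤ | 0 < p.1 ∧ 0 < p.2 ∧ p.1 * p.2 ∣ p.1 ^ 2 + p.2 ^ 2 + 1}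
      = {p : ℤ × ℤ | ∃ n : ℤ, p = (F (2 * n - 1), F (2 * n + 1))} := by
  ext ⟨a, b⟩
  simp only [Set.mem_setOf_eq]
  constructor
  · rintro ⟨ha, hb, hd⟩
    obtain ⟨n, hn1, hn2⟩ := fibP_descent F hF0 hF1 hrec (a + b).toNat a b (by omega) ha hb hd
    exact ⟨n, by rw [Prod.ext_iff]; exact ⟨hn1, hn2⟩⟩
  · rintro ⟨n, hp⟩
    rw [Prod.ext_iff] at hp
    obtain ⟨h1, h2⟩ := hp
    simp only at h1 h2
    subst h1; subst h2
    refine ⟨fibP_pos_odd F hF0 hF1 hrec n, ?_, ?_⟩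
    · have := fibP_pos_odd F hF0 hF1 hrec (n + 1)
      rw [show 2 * (n + 1) - 1 = 2 * n + 1 by ring] at this
      exact this
    · exact ⟨3, by linarith [fibP_ident F hF0 hF1 hrec n]⟩
end

section
/- For all integers i, j, k: F(2(i+j+k)-1) = 3·F(2i-1)·F(2j-1)·F(2k-1) - F(2i-1)·F(2j-1)·F(2k+1) - F(2i-1)·F(2j+1)·F(2k-1) - F(2i+1)·F(2j-1)·F(2k-1) + F(2i+1)·F(2j+1)·F(2k+1). -/
/-- Fibonacci identity for F(2(i+j+k)-1). -/
theorem fib_triple_identity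
    (F : ℤ → ℤ) (hF0 : F 0 = 0) (hF1 : F 1 = 1)
    (hrec : ∀ n : ℤ, F (n + 1) = F n + F (n - 1)) :
    ∀ i j k : ℤ,
      F (2 * (i + j + k) - 1) =
        3 * F (2 * i - 1) * F (2 * j - 1) * F (2 * k - 1)
        - F (2 * i - 1) * F (2 * j - 1) * F (2 * k + 1)
        - F (2 * i - 1) * F (2 * j + 1) * F (2 * k - 1)
        - F (2 * i + 1) * F (2 * j - 1) * F (2 * k - 1)
        + F (2 * i + 1) * F (2 * j + 1) * F (2 * k + 1) := by
  have hneg : F (-1) = 1 := by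
    have h := hrec 0
    rw [show (0:ℤ) + 1 = 1 by ring, show (0:ℤ) - 1 = -1 by ring, hF0, hF1] at h
    linarith
  have hadd : ∀ n m : ℤ, F (m + n) = F (m + 1) * F n + F m * F (n - 1) := by
    intro n
    induction n using Int.induction_on with
    | zero =>
      intro m
      rw [show m + (0:ℤ) = m by ring, show (0:ℤ) - 1 = -1 by ring, hF0, hneg]
      ring
    | succ n ih =>
      intro m
      have h1 := ih (m + 1)
      have h2 := hrec (m + 1)
      rw [show m + 1 - 1 = m by ring] at h2
      have h3 := hrec (n : ℤ)
      rw [show m + ((n : ℤ) + 1) = m + 1 + (n : ℤ) by ring,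
        show (n : ℤ) + 1 - 1 = (n : ℤ) by ring]
      linear_combination h1 + F (n : ℤ) * h2 - F (m + 1) * h3
    | pred n ih =>
      intro m
      have h1 := ih (m - 1)
      rw [show m - 1 + -(n : ℤ) = m + (-(n : ℤ) - 1) by ring,
        show m - 1 + 1 = m by ring] at h1
      have h2 := hrec m
      have h3 := hrec (-(n : ℤ) - 1)
      rw [show -(n : ℤ) - 1 + 1 = -(n : ℤ) by ring] at h3
      linear_combination h1 - F (-(n : ℤ) - 1) * h2 + F m * h3
  intro i j k
  have e1 : F (2 * (i + j + k) - 1) =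
      F (2 * i + 1) * F (2 * (j + k) - 1) + F (2 * i) * F (2 * (j + k) - 2) := by
    have h := hadd (2 * (j + k) - 1) (2 * i)
    rw [show 2 * i + (2 * (j + k) - 1) = 2 * (i + j + k) - 1 by ring,
      show 2 * (j + k) - 1 - 1 = 2 * (j + k) - 2 by ring] at h
    exact h
  have e2 : F (2 * (j + k) - 1) =
      F (2 * j + 1) * F (2 * k - 1) + F (2 * j) * F (2 * k - 2) := by
    have h := hadd (2 * k - 1) (2 * j)
    rw [show 2 * j + (2 * k - 1) = 2 * (j + k) - 1 by ring,
      show 2 * k - 1 - 1 = 2 * k - 2 by ring] at h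
    exact h
  have e3 : F (2 * (j + k) - 2) =
      F (2 * j) * F (2 * k - 1) + F (2 * j - 1) * F (2 * k - 2) := by
    have h := hadd (2 * k - 1) (2 * j - 1)
    rw [show 2 * j - 1 + (2 * k - 1) = 2 * (j + k) - 2 by ring,
      show 2 * j - 1 + 1 = 2 * j by ring,
      show 2 * k - 1 - 1 = 2 * k - 2 by ring] at h
    exact h
  have ri1 : F (2 * i + 1) = F (2 * i) + F (2 * i - 1) := hrec (2 * i)
  have rj1 : F (2 * j + 1) = F (2 * j) + F (2 * j - 1) := hrec (2 * j)
  have rk1 : F (2 * k + 1) = F (2 * k) + F (2 * k - 1) := hrec (2 * k)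
  have rk2 : F (2 * k - 2) = F (2 * k) - F (2 * k - 1) := by
    have h := hrec (2 * k - 1)
    rw [show 2 * k - 1 + 1 = 2 * k by ring, show 2 * k - 1 - 1 = 2 * k - 2 by ring] at h
    linarith
  rw [e1, e2, e3, ri1, rj1, rk1, rk2]
  ring
end

section
/- Let A be a 3-by-3 integer matrix with entries (a,b,c; d,e,f; g,h,i) such that det A = 0 and the four 2-by-2 minors ae-bd, bf-ce, dh-eg, ei-fh are all equal to a nonzero integer N. Then N·(d + f) = (a*f - c*d)·e, and moreover a*f - c*d = d*i - f*g. -/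
/-- 3×3 matrix with det 0 and the four indicated 2×2 minors equal to N ≠ 0. -/
theorem tame_three_by_three (a b c d e f g h i N : ℤ) (hN : N ≠ 0)
    (hdet : a * (e * i - f * h) - b * (d * i - f * g) + c * (d * h - e * g) = 0)
    (h1 : a * e - b * d = N) (h2 : b * f - c * e = N)
    (h3 : d * h - e * g = N) (h4 : e * i - f * h = N) :
    N * (d + f) = (a * f - c * d) * e ∧ a * f - c * d = d * i - f * g := by
  constructor
  · linear_combination (-f) * h1 + (-d) * h2
  · by_cases he : e = 0
    · have hb : b ≠ 0 := by
        intro hb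
        apply hN
        rw [← h1, he, hb]; ring
      have key : b * (a * f - c * d) = b * (d * i - f * g) := by
        linear_combination a * h2 + c * h1 + hdet - a * h4 - c * h3
      exact mul_left_cancel₀ hb key
    · have key : e * (a * f - c * d) = e * (d * i - f * g) := by
        linear_combination f * h1 + d * h2 - d * h4 - f * h3
      exact mul_left_cancel₀ he key
end

section
/- Define the Cayley hyperdeterminant of a 2×2×2 integer array M with entries m_{ijk} (i,j,k ∈ {0,1}) by Det M = ((m₀₀₀m₁₁₁ - m₀₁₁m₁₀₀) + (m₀₀₁m₁₁₀ - m₀₁₀m₁₀₁))² - 4(m₀₀₀m₁₁₀ - m₀₁₀m₁₀₀)(m₀₀₁m₁₁₁ - m₀₁₁m₁₀₁). If M' is obtained from M by acting with a triple of 2×2 integer matrices (A,B,C) via m'_{ijk} = Σ_{p,q,r} A_{ip}B_{jq}C_{kr}m_{pqr}, then Det M' = (det A · det B · det C)² · Det M. -/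
/-- Cayley hyperdeterminant of a 2×2×2 integer array. -/
def hyperDet (M : Fin 2 → Fin 2 → Fin 2 → ℤ) : ℤ :=
  ((M 0 0 0 * M 1 1 1 - M 0 1 1 * M 1 0 0)
      + (M 0 0 1 * M 1 1 0 - M 0 1 0 * M 1 0 1)) ^ 2
    - 4 * (M 0 0 0 * M 1 1 0 - M 0 1 0 * M 1 0 0)
        * (M 0 0 1 * M 1 1 1 - M 0 1 1 * M 1 0 1)

/-- the hyperdeterminant transforms by (det A · det B · det C)² under
the action of a triple of 2×2 integer matrices. -/
theorem hyperDet_action (M M' : Fin 2 → Fin 2 → Fin 2 → ℤ)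
    (A B C : Matrix (Fin 2) (Fin 2) ℤ)
    (hM' : ∀ i j k, M' i j k = ∑ p, ∑ q, ∑ r, A i p * B j q * C k r * M p q r) :
    hyperDet M' = (A.det * B.det * C.det) ^ 2 * hyperDet M := by
  simp only [hyperDet, hM', Fin.sum_univ_two, Matrix.det_fin_two]
  ring
end

section
/- Let A, B, C ∈ SL₂(ℤ) and suppose the triple (A,B,C) fixes the 2×2×2 array I (with I₀₀₀ = I₁₁₁ = 1 and all other entries 0) under the action m'_{ijk} = Σ A_{ip}B_{jq}C_{kr} I_{pqr}. Then (A,B,C) is one of (I₂,I₂,I₂), (I₂,-I₂,-I₂), (-I₂,I₂,-I₂), (-I₂,-I₂,I₂), where I₂ is the 2×2 identity matrix. -/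
/-- The cube I with 1 at (0,0,0) and (1,1,1) and 0 elsewhere. -/
def cubeI : Fin 2 → Fin 2 → Fin 2 → ℤ :=
  fun i j k => if i = j ∧ j = k then 1 else 0

/-- the stabilizer of I in SL₂(ℤ)³ is the Klein four-group
{(I,I,I),(I,-I,-I),(-I,I,-I),(-I,-I,I)}. -/
theorem stabilizer_cubeI (A B C : Matrix (Fin 2) (Fin 2) ℤ)
    (hA : A.det = 1) (hB : B.det = 1) (hC : C.det = 1)
    (hfix : ∀ i j k, (∑ p, ∑ q, ∑ r, A i p * B j q * C k r * cubeI p q r)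
        = cubeI i j k) :
    (A = 1 ∧ B = 1 ∧ C = 1) ∨ (A = 1 ∧ B = -1 ∧ C = -1) ∨
    (A = -1 ∧ B = 1 ∧ C = -1) ∨ (A = -1 ∧ B = -1 ∧ C = 1) := by
  have e : ∀ i j k : Fin 2, A i 0 * B j 0 * C k 0 + A i 1 * B j 1 * C k 1 = cubeI i j k := by
    intro i j k
    have := hfix i j k
    simpa [cubeI, Fin.sum_univ_two] using this
  have h000 := e 0 0 0
  have h001 := e 0 0 1
  have h010 := e 0 1 0
  have h011 := e 0 1 1
  have h100 := e 1 0 0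
  have h101 := e 1 0 1
  have h110 := e 1 1 0
  have h111 := e 1 1 1
  simp only [cubeI] at h000 h001 h010 h011 h100 h101 h110 h111
  norm_num at h000 h001 h010 h011 h100 h101 h110 h111
  rw [Matrix.det_fin_two] at hA hB hC
  -- the key bilinear consequences, using invertibility of C
  have F1 : A 0 0 * B 1 0 = 0 := by
    linear_combination (C 1 1) * h010 - (C 0 1) * h011 - (A 0 0 * B 1 0) * hC
  have F2 : A 0 1 * B 1 1 = 0 := by
    linear_combination (-(C 1 0)) * h010 + (C 0 0) * h011 - (A 0 1 * B 1 1) * hC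
  have F3 : A 1 0 * B 0 0 = 0 := by
    linear_combination (C 1 1) * h100 - (C 0 1) * h101 - (A 1 0 * B 0 0) * hC
  have F4 : A 1 1 * B 0 1 = 0 := by
    linear_combination (-(C 1 0)) * h100 + (C 0 0) * h101 - (A 1 1 * B 0 1) * hC
  have F5 : A 0 0 * B 0 0 = C 1 1 := by
    linear_combination (C 1 1) * h000 - (C 0 1) * h001 - (A 0 0 * B 0 0) * hC
  have F6 : A 0 1 * B 0 1 = -(C 1 0) := by
    linear_combination (-(C 1 0)) * h000 + (C 0 0) * h001 - (A 0 1 * B 0 1) * hC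
  have F7 : A 1 0 * B 1 0 = -(C 0 1) := by
    linear_combination (C 1 1) * h110 - (C 0 1) * h111 - (A 1 0 * B 1 0) * hC
  have F8 : A 1 1 * B 1 1 = C 0 0 := by
    linear_combination (-(C 1 0)) * h110 + (C 0 0) * h111 - (A 1 1 * B 1 1) * hC
  -- rule out the antidiagonal case A 0 0 = 0
  have ha : A 0 0 ≠ 0 := by
    intro ha0
    have hbc : A 0 1 * A 1 0 = -1 := by linear_combination -hA + A 1 1 * ha0
    have hb : A 0 1 ≠ 0 := by intro h; rw [h] at hbc; simp at hbc
    have hc : A 1 0 ≠ 0 := by intro h; rw [h] at hbc; simp at hbc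
    have hh : B 1 1 = 0 := by
      rcases mul_eq_zero.mp F2 with h | h
      · exact absurd h hb
      · exact h
    have he : B 0 0 = 0 := by
      rcases mul_eq_zero.mp F3 with h | h
      · exact absurd h hc
      · exact h
    have hfg : B 0 1 * B 1 0 = -1 := by linear_combination -hB + B 1 1 * he
    have hf : B 0 1 ≠ 0 := by intro h; rw [h] at hfg; simp at hfg
    have hd : A 1 1 = 0 := by
      rcases mul_eq_zero.mp F4 with h | h
      · exact h
      · exact absurd h hf
    -- now det C = -1, contradiction
    have e6 : C 1 0 = -(A 0 1 * B 0 1) := by linarith [F6]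
    have e7 : C 0 1 = -(A 1 0 * B 1 0) := by linarith [F7]
    have h4 : C 0 1 * C 1 0 = 1 := by
      rw [e6, e7]; linear_combination (B 0 1 * B 1 0) * hbc - hfg
    have h1 : C 0 0 = 0 := by rw [← F8, hd]; ring
    have h2 : C 1 1 = 0 := by rw [← F5, ha0]; ring
    have h5 : C 0 0 * C 1 1 = 0 := by rw [h1]; ring
    linarith [hC, h4, h5]
  have hg : B 1 0 = 0 := by
    rcases mul_eq_zero.mp F1 with h | h
    · exact absurd h ha
    · exact h
  have heh : B 0 0 * B 1 1 = 1 := by linear_combination hB + B 0 1 * hg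
  have he : B 0 0 ≠ 0 := by intro h; rw [h] at heh; simp at heh
  have hh : B 1 1 ≠ 0 := by intro h; rw [h] at heh; simp at heh
  have hc : A 1 0 = 0 := by
    rcases mul_eq_zero.mp F3 with h | h
    · exact h
    · exact absurd h he
  have hb : A 0 1 = 0 := by
    rcases mul_eq_zero.mp F2 with h | h
    · exact h
    · exact absurd h hh
  have had : A 0 0 * A 1 1 = 1 := by linear_combination hA + A 0 1 * hc
  have hd : A 1 1 ≠ 0 := by intro h; rw [h] at had; simp at had
  have hf : B 0 1 = 0 := by
    rcases mul_eq_zero.mp F4 with h | h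
    · exact absurd h hd
    · exact h
  -- C is determined
  have hC00 : C 0 0 = A 1 1 * B 1 1 := F8.symm
  have hC11 : C 1 1 = A 0 0 * B 0 0 := F5.symm
  have hC10 : C 1 0 = 0 := by linear_combination F6 - B 0 1 * hb
  have hC01 : C 0 1 = 0 := by linear_combination F7 - B 1 0 * hc
  rcases Int.mul_eq_one_iff_eq_one_or_neg_one.mp had with ⟨ha1, hd1⟩ | ⟨ha1, hd1⟩ <;>
  rcases Int.mul_eq_one_iff_eq_one_or_neg_one.mp heh with ⟨he1, hh1⟩ | ⟨he1, hh1⟩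
  · left
    refine ⟨?_, ?_, ?_⟩ <;> ext i j <;> fin_cases i <;> fin_cases j <;>
      simp [Matrix.one_apply, Matrix.neg_apply, ha1, hb, hc, hd1, he1, hf, hg, hh1,
        hC00, hC01, hC10, hC11]
  · right; left
    refine ⟨?_, ?_, ?_⟩ <;> ext i j <;> fin_cases i <;> fin_cases j <;>
      simp [Matrix.one_apply, Matrix.neg_apply, ha1, hb, hc, hd1, he1, hf, hg, hh1,
        hC00, hC01, hC10, hC11]
  · right; right; left
    refine ⟨?_, ?_, ?_⟩ <;> ext i j <;> fin_cases i <;> fin_cases j <;>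
      simp [Matrix.one_apply, Matrix.neg_apply, ha1, hb, hc, hd1, he1, hf, hg, hh1,
        hC00, hC01, hC10, hC11]
  · right; right; right
    refine ⟨?_, ?_, ?_⟩ <;> ext i j <;> fin_cases i <;> fin_cases j <;>
      simp [Matrix.one_apply, Matrix.neg_apply, ha1, hb, hc, hd1, he1, hf, hg, hh1,
        hC00, hC01, hC10, hC11]
end

section
/- Let A be a 2×2×2 array of positive integers such that all six 2×2 cross sections (the two layers in each of the three axis directions) have determinant 1. Then there is an integer n such that A has entries a₀₀₀ = F(2n-3), a₀₀₁ = a₀₁₀ = a₁₀₀ = F(2n-1), a₀₁₁ = a₁₀₁ = a₁₁₀ = F(2n+1), a₁₁₁ = F(2n+3), where F is the Fibonacci sequence extended to ℤ. -/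
/-- Auxiliary: the square relation derived from five determinant-type equations. -/
lemma cube_sq_rel (a b c d e f g h : ℤ)
    (h1 : a*d - b*c = 1) (h2 : e*h - f*g = 1) (h3 : a*f - b*e = 1)
    (h5 : a*g - c*e = 1) (hK : a*h = d*e) :
    e^2 = a^2 + 1 + e*(b+c) := by
  linear_combination (-(e^2))*h1 + a^2*h2 + (a*g)*h3 + (1+b*e)*h5 - (a*e)*hK

/-- Auxiliary: in a positive cube with the six determinant conditions, b = c. -/
lemma cube_contra (a b c d e f g h : ℤ)
    (pa : 0 < a) (pb : 0 < b) (pc : 0 < c) (pd : 0 < d)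
    (pe : 0 < e) (pf : 0 < f) (pg : 0 < g) (ph : 0 < h)
    (h1 : a*d - b*c = 1) (h2 : e*h - f*g = 1) (h3 : a*f - b*e = 1)
    (h4 : c*h - d*g = 1) (h5 : a*g - c*e = 1) (h6 : b*h - d*f = 1) :
    b = c := by
  by_contra hbc
  have hC : a*(f-g) = e*(b-c) := by linear_combination h3 - h5
  have hfg : f ≠ g := by
    intro hfg
    apply hbc
    rw [hfg] at hC
    have : e*(b-c) = 0 := by linarith
    rcases mul_eq_zero.mp this with h' | h'
    · exact absurd h' (by positivity)
    · linarith
  have hF : h*(b-c) = d*(f-g) := by linear_combination h6 - h4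
  have h9 : (a*h - d*e)*(f-g) = 0 := by linear_combination h*hC + e*hF
  have hK : a*h = d*e := by
    rcases mul_eq_zero.mp h9 with h' | h'
    · linarith
    · exact absurd (by linarith : f = g) hfg
  have he2 : e^2 = a^2 + 1 + e*(b+c) := cube_sq_rel a b c d e f g h h1 h2 h3 h5 hK
  have hd2 : d^2 = h^2 + 1 + d*(g+f) :=
    cube_sq_rel h g f e d c b a (by linear_combination h2) (by linear_combination h1)
      (by linear_combination h4) (by linear_combination h6) (by linear_combination hK)
  have hea : a < e := by nlinarith [he2, sq_nonneg (e - a)]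
  have hdh : h < d := by nlinarith [hd2, sq_nonneg (d - h)]
  have hbf : f < b := by nlinarith [h6, mul_pos pf ph]
  have hcg : g < c := by nlinarith [h4, mul_pos pg ph]
  have hprod : (f+1)*(a+1) ≤ b*e :=
    mul_le_mul (by linarith) (by linarith) (by linarith) (by linarith)
  nlinarith [h3, hprod]

/-- Negative-index Fibonacci identity. -/
lemma fib_neg_nat (F : ℤ → ℤ) (hF0 : F 0 = 0) (hF1 : F 1 = 1)
    (hrec : ∀ n : ℤ, F (n + 1) = F n + F (n - 1)) :
    ∀ j : ℕ, F (-(j:ℤ)) = (-1)^(j+1) * F (j:ℤ) := by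
  intro j
  induction j using Nat.twoStepInduction with
  | zero => simpa using hF0.trans (by simp [hF0])
  | one =>
    have r := hrec 0
    norm_num at r ⊢
    rw [hF1, hF0] at r
    linarith
  | more j ih1 ih2 =>
    have r : F (-(j:ℤ)) = F (-(j:ℤ)-1) + F (-(j:ℤ)-2) := by
      have := hrec (-(j:ℤ)-1)
      have e1 : -(j:ℤ)-1+1 = -(j:ℤ) := by ring
      have e2 : -(j:ℤ)-1-1 = -(j:ℤ)-2 := by ring
      rw [e1, e2] at this
      exact this
    have rp : F ((j:ℤ)+2) = F ((j:ℤ)+1) + F (j:ℤ) := by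
      have := hrec ((j:ℤ)+1)
      have e1 : (j:ℤ)+1+1 = (j:ℤ)+2 := by ring
      have e2 : (j:ℤ)+1-1 = (j:ℤ) := by ring
      rw [e1, e2] at this
      exact this
    have e3 : -(((j:ℕ)+2 : ℕ):ℤ) = -(j:ℤ)-2 := by push_cast; ring
    have e4 : -(((j:ℕ)+1 : ℕ):ℤ) = -(j:ℤ)-1 := by push_cast; ring
    have e5 : (((j:ℕ)+2 : ℕ):ℤ) = (j:ℤ)+2 := by push_cast; ring
    have e6 : (((j:ℕ)+1 : ℕ):ℤ) = (j:ℤ)+1 := by push_cast; ring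
    rw [e3, e5]
    rw [e4, e6] at ih2
    have : F (-(j:ℤ)-2) = F (-(j:ℤ)) - F (-(j:ℤ)-1) := by linarith
    rw [this, ih1, ih2, rp]
    ring

lemma fib_step (F : ℤ → ℤ) (hrec : ∀ n : ℤ, F (n + 1) = F n + F (n - 1)) :
    ∀ n : ℤ, F (n+2) = 3 * F n - F (n-2) := by
  intro n
  have r1 := hrec (n+1)
  have r2 := hrec n
  have r3 := hrec (n-1)
  have e1 : n+1+1 = n+2 := by ring
  have e2 : n+1-1 = n := by ring
  have e3 : n-1+1 = n := by ring
  have e4 : n-1-1 = n-2 := by ring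
  rw [e1, e2] at r1
  rw [e3, e4] at r3
  linarith

lemma fib_markov (F : ℤ → ℤ) (hF0 : F 0 = 0) (hF1 : F 1 = 1)
    (hrec : ∀ n : ℤ, F (n + 1) = F n + F (n - 1)) :
    ∀ k : ℕ, F (2*(k:ℤ)+1)^2 + F (2*(k:ℤ)+3)^2 + 1
      = 3 * (F (2*(k:ℤ)+1) * F (2*(k:ℤ)+3)) := by
  have hF2 : F 2 = 1 := by
    have := hrec 1; norm_num at this; rw [hF1, hF0] at this; linarith
  have hF3 : F 3 = 2 := by
    have := hrec 2; norm_num at this; rw [hF2, hF1] at this; linarith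
  intro k
  induction k with
  | zero => norm_num [hF1, hF3]
  | succ k ih =>
    have hz : F (2*(k:ℤ)+5) = 3 * F (2*(k:ℤ)+3) - F (2*(k:ℤ)+1) := by
      have := fib_step F hrec (2*(k:ℤ)+3)
      have e1 : 2*(k:ℤ)+3+2 = 2*(k:ℤ)+5 := by ring
      have e2 : 2*(k:ℤ)+3-2 = 2*(k:ℤ)+1 := by ring
      rw [e1, e2] at this
      exact this
    have e1 : 2*((k:ℕ)+1:ℕ)+1 = 2*(k:ℤ)+3 := by push_cast; ring
    have e2 : 2*((k:ℕ)+1:ℕ)+3 = 2*(k:ℤ)+5 := by push_cast; ring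
    rw [show (2*(((k:ℕ)+1:ℕ)):ℤ)+1 = 2*(k:ℤ)+3 by push_cast; ring,
        show (2*(((k:ℕ)+1:ℕ)):ℤ)+3 = 2*(k:ℤ)+5 by push_cast; ring]
    linear_combination ih + (F (2*(k:ℤ)+5) - F (2*(k:ℤ)+1)) * hz

lemma fib_cat (F : ℤ → ℤ) (hF0 : F 0 = 0) (hF1 : F 1 = 1)
    (hrec : ∀ n : ℤ, F (n + 1) = F n + F (n - 1)) :
    ∀ k : ℕ, F (2*(k:ℤ)+1) * F (2*(k:ℤ)+5) = F (2*(k:ℤ)+3)^2 + 1 := by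
  intro k
  have hz : F (2*(k:ℤ)+5) = 3 * F (2*(k:ℤ)+3) - F (2*(k:ℤ)+1) := by
    have := fib_step F hrec (2*(k:ℤ)+3)
    have e1 : 2*(k:ℤ)+3+2 = 2*(k:ℤ)+5 := by ring
    have e2 : 2*(k:ℤ)+3-2 = 2*(k:ℤ)+1 := by ring
    rw [e1, e2] at this
    exact this
  linear_combination (F (2*(k:ℤ)+1)) * hz - fib_markov F hF0 hF1 hrec k

lemma fib_neg_odd (F : ℤ → ℤ) (hF0 : F 0 = 0) (hF1 : F 1 = 1)
    (hrec : ∀ n : ℤ, F (n + 1) = F n + F (n - 1)) :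
    ∀ n : ℤ, Odd n → F (-n) = F n := by
  have key : ∀ m : ℕ, Odd m → F (-(m:ℤ)) = F (m:ℤ) := by
    intro m hm
    have := fib_neg_nat F hF0 hF1 hrec m
    have hev : Even (m+1) := by
      rcases hm with ⟨t, ht⟩
      exact ⟨t+1, by omega⟩
    rw [hev.neg_one_pow] at this
    simpa using this
  intro n hn
  rcases le_total 0 n with h | h
  · lift n to ℕ using h
    exact key n (by exact_mod_cast hn)
  · have h0 : (((-n).toNat : ℤ)) = -n := Int.toNat_of_nonneg (by linarith)
    have hodd : Odd ((-n).toNat) := by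
      have : Odd (-n) := hn.neg
      rw [← h0] at this
      exact_mod_cast this
    have := key (-n).toNat hodd
    rw [h0] at this
    simpa using this.symm

lemma fib_descent (F : ℤ → ℤ) (hF0 : F 0 = 0) (hF1 : F 1 = 1)
    (hrec : ∀ n : ℤ, F (n + 1) = F n + F (n - 1)) :
    ∀ N : ℕ, ∀ a p q h : ℤ, q.toNat ≤ N →
      0 < a → 0 < p → 0 < q → 0 < h → p ≤ q →
      a * q = p^2 + 1 → p * h = q^2 + 1 →
      ∃ k : ℕ, a = F (2*(k:ℤ)-3) ∧ p = F (2*(k:ℤ)-1) ∧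
        q = F (2*(k:ℤ)+1) ∧ h = F (2*(k:ℤ)+3) := by
  have hFm1 : F (-1) = 1 := by
    have := hrec 0; norm_num at this; rw [hF1, hF0] at this; linarith
  have hFm2 : F (-2) = -1 := by
    have := hrec (-1); norm_num at this; rw [hF0, hFm1] at this; linarith
  have hFm3 : F (-3) = 2 := by
    have := hrec (-2); norm_num at this; rw [hFm1, hFm2] at this; linarith
  have hF2 : F 2 = 1 := by
    have := hrec 1; norm_num at this; rw [hF1, hF0] at this; linarith
  have hF3 : F 3 = 2 := by
    have := hrec 2; norm_num at this; rw [hF2, hF1] at this; linarith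
  intro N
  induction N with
  | zero =>
    intro a p q h hN _ _ hq _ _ _ _
    omega
  | succ N ih =>
    intro a p q h hN ha hp hq hh hpq haq hph
    rcases eq_or_lt_of_le hpq with heq | hlt
    · -- p = q : base of the descent
      subst heq
      have hd1 : p * (a - p) = 1 := by linear_combination haq
      have hp1 : p = 1 := by
        have h2 := Int.eq_one_of_mul_eq_one_right (by linarith : (0:ℤ) ≤ p) hd1
        exact h2
      have ha2 : a = 2 := by rw [hp1] at haq; linarith
      have hh2 : h = 2 := by rw [hp1] at hph; linarith
      refine ⟨0, ?_, ?_, ?_, ?_⟩ <;> norm_num [ha2, hp1, hh2, hFm3, hFm1, hF1, hF3]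
    · -- p < q : descend
      have cop : IsCoprime p q := ⟨-p, a, by linear_combination haq⟩
      have hdvd : p ∣ q^2 * (a^2+1) :=
        ⟨p^3 + 2*p + h, by linear_combination (a*q + p^2 + 1) * haq - hph⟩
      have hpd : p ∣ a^2 + 1 := (cop.pow_right).dvd_of_dvd_mul_left hdvd
      obtain ⟨c, hc⟩ := hpd
      have hcpos : 0 < c := by nlinarith
      have hap : a ≤ p := by nlinarith
      have hmeas : p.toNat ≤ N := by omega
      obtain ⟨k, hk1, hk2, hk3, hk4⟩ :=
        ih c a p q hmeas hcpos ha hp hq hap (by linear_combination -hc) haq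
      refine ⟨k+1, ?_, ?_, ?_, ?_⟩
      · rw [show 2*(((k:ℕ)+1:ℕ):ℤ)-3 = 2*(k:ℤ)-1 by push_cast; ring]; exact hk2
      · rw [show 2*(((k:ℕ)+1:ℕ):ℤ)-1 = 2*(k:ℤ)+1 by push_cast; ring]; exact hk3
      · rw [show 2*(((k:ℕ)+1:ℕ):ℤ)+1 = 2*(k:ℤ)+3 by push_cast; ring]; exact hk4
      · rw [show 2*(((k:ℕ)+1:ℕ):ℤ)+3 = 2*(k:ℤ)+5 by push_cast; ring]
        have hcat := fib_cat F hF0 hF1 hrec k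
        have hcan : p * F (2*(k:ℤ)+5) = p * h := by
          rw [hph, hk3, hk4]; exact hcat
        exact (mul_left_cancel₀ (ne_of_gt hp) hcan).symm

/-- a positive 2×2×2 integer cube all of whose six 2×2 cross
sections have determinant 1 is of the Fibonacci form A_n. -/
theorem positive_cube_sl2_cross_sections
    (F : ℤ → ℤ) (hF0 : F 0 = 0) (hF1 : F 1 = 1)
    (hrec : ∀ n : ℤ, F (n + 1) = F n + F (n - 1))
    (A : Fin 2 → Fin 2 → Fin 2 → ℤ)
    (hpos : ∀ i j k, 0 < A i j k)
    (hcross1 : ∀ i, A i 0 0 * A i 1 1 - A i 0 1 * A i 1 0 = 1)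
    (hcross2 : ∀ j, A 0 j 0 * A 1 j 1 - A 0 j 1 * A 1 j 0 = 1)
    (hcross3 : ∀ k, A 0 0 k * A 1 1 k - A 0 1 k * A 1 0 k = 1) :
    ∃ n : ℤ,
      A 0 0 0 = F (2 * n - 3) ∧
      A 0 0 1 = F (2 * n - 1) ∧ A 0 1 0 = F (2 * n - 1) ∧ A 1 0 0 = F (2 * n - 1) ∧
      A 0 1 1 = F (2 * n + 1) ∧ A 1 0 1 = F (2 * n + 1) ∧ A 1 1 0 = F (2 * n + 1) ∧
      A 1 1 1 = F (2 * n + 3) := by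
  set a := A 0 0 0 with hadef
  set b := A 0 0 1 with hbdef
  set c := A 0 1 0 with hcdef
  set d := A 0 1 1 with hddef
  set e := A 1 0 0 with hedef
  set f := A 1 0 1 with hfdef
  set g := A 1 1 0 with hgdef
  set h := A 1 1 1 with hhdef
  have pa : 0 < a := hpos 0 0 0
  have pb : 0 < b := hpos 0 0 1
  have pc : 0 < c := hpos 0 1 0
  have pd : 0 < d := hpos 0 1 1
  have pe : 0 < e := hpos 1 0 0
  have pf : 0 < f := hpos 1 0 1
  have pg : 0 < g := hpos 1 1 0
  have ph : 0 < h := hpos 1 1 1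
  have e1 : a*d - b*c = 1 := hcross1 0
  have e2 : e*h - f*g = 1 := hcross1 1
  have e3 : a*f - b*e = 1 := hcross2 0
  have e4 : c*h - d*g = 1 := hcross2 1
  have e5 : a*g - c*e = 1 := hcross3 0
  have e6 : b*h - d*f = 1 := hcross3 1
  have hbc : b = c := cube_contra a b c d e f g h pa pb pc pd pe pf pg ph e1 e2 e3 e4 e5 e6
  have hbe : b = e := cube_contra a b e f c d g h pa pb pe pf pc pd pg ph
    (by linear_combination e3) (by linear_combination e4) (by linear_combination e1)
    (by linear_combination e2) (by linear_combination e5) (by linear_combination e6)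
  have hdf : d = f := by
    have hA : a*(d-f) = b*(c-e) := by linear_combination e1 - e3
    have : b*(c-e) = 0 := by rw [← hbc, ← hbe]; ring
    rw [this] at hA
    rcases mul_eq_zero.mp hA with h' | h'
    · exact absurd h' (by positivity)
    · linarith
  have hfg : f = g := by
    have hC : a*(f-g) = e*(b-c) := by linear_combination e3 - e5
    have : e*(b-c) = 0 := by rw [hbc]; ring
    rw [this] at hC
    rcases mul_eq_zero.mp hC with h' | h'
    · exact absurd h' (by positivity)
    · linarith
  have haq : a * d = b^2 + 1 := by
    rw [← hbc] at e1; linear_combination e1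
  have hph : b * h = d^2 + 1 := by
    rw [← hbe, ← hfg, ← hdf] at e2; linear_combination e2
  rcases le_total b d with hle | hle
  · obtain ⟨k, hk1, hk2, hk3, hk4⟩ := fib_descent F hF0 hF1 hrec d.toNat a b d h
      le_rfl pa pb pd ph hle haq hph
    exact ⟨(k:ℤ), hk1, hk2, hbc ▸ hk2, hbe ▸ hk2, hk3, hdf ▸ hk3, hfg ▸ hdf ▸ hk3, hk4⟩
  · obtain ⟨k, hk1, hk2, hk3, hk4⟩ := fib_descent F hF0 hF1 hrec b.toNat h d b a
      le_rfl ph pd pb pa hle (by linear_combination hph) (by linear_combination haq)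
    refine ⟨-(k:ℤ), ?_, ?_, ?_, ?_, ?_, ?_, ?_, ?_⟩
    · rw [show 2*(-(k:ℤ))-3 = -(2*(k:ℤ)+3) by ring,
        fib_neg_odd F hF0 hF1 hrec _ ⟨(k:ℤ)+1, by ring⟩]
      exact hk4
    · rw [show 2*(-(k:ℤ))-1 = -(2*(k:ℤ)+1) by ring,
        fib_neg_odd F hF0 hF1 hrec _ ⟨(k:ℤ), by ring⟩]
      exact hk3
    · rw [show 2*(-(k:ℤ))-1 = -(2*(k:ℤ)+1) by ring,
        fib_neg_odd F hF0 hF1 hrec _ ⟨(k:ℤ), by ring⟩]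
      exact hbc ▸ hk3
    · rw [show 2*(-(k:ℤ))-1 = -(2*(k:ℤ)+1) by ring,
        fib_neg_odd F hF0 hF1 hrec _ ⟨(k:ℤ), by ring⟩]
      exact hbe ▸ hk3
    · rw [show 2*(-(k:ℤ))+1 = -(2*(k:ℤ)-1) by ring,
        fib_neg_odd F hF0 hF1 hrec _ ⟨(k:ℤ)-1, by ring⟩]
      exact hk2
    · rw [show 2*(-(k:ℤ))+1 = -(2*(k:ℤ)-1) by ring,
        fib_neg_odd F hF0 hF1 hrec _ ⟨(k:ℤ)-1, by ring⟩]
      exact hdf ▸ hk2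
    · rw [show 2*(-(k:ℤ))+1 = -(2*(k:ℤ)-1) by ring,
        fib_neg_odd F hF0 hF1 hrec _ ⟨(k:ℤ)-1, by ring⟩]
      exact hfg ▸ hdf ▸ hk2
    · rw [show 2*(-(k:ℤ))+3 = -(2*(k:ℤ)-3) by ring,
        fib_neg_odd F hF0 hF1 hrec _ ⟨(k:ℤ)-2, by ring⟩]
      exact hk1
end

section
/- For every integer n, the 2×2×2 array A_n with entries a₀₀₀ = F(2n-3), a₀₀₁ = a₀₁₀ = a₁₀₀ = F(2n-1), a₀₁₁ = a₁₀₁ = a₁₁₀ = F(2n+1), a₁₁₁ = F(2n+3) has all six 2×2 cross sections of determinant 1, and its Cayley hyperdeterminant equals 5. -/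
/-- the Fibonacci cube A_n has all six cross sections of
determinant 1 and hyperdeterminant 5. -/
theorem fib_cube_cross_sections
    (F : ℤ → ℤ) (hF0 : F 0 = 0) (hF1 : F 1 = 1)
    (hrec : ∀ n : ℤ, F (n + 1) = F n + F (n - 1)) :
    ∀ n : ℤ, ∀ A : Fin 2 → Fin 2 → Fin 2 → ℤ,
      A 0 0 0 = F (2 * n - 3) →
      A 0 0 1 = F (2 * n - 1) → A 0 1 0 = F (2 * n - 1) → A 1 0 0 = F (2 * n - 1) →
      A 0 1 1 = F (2 * n + 1) → A 1 0 1 = F (2 * n + 1) → A 1 1 0 = F (2 * n + 1) →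
      A 1 1 1 = F (2 * n + 3) →
      ((∀ i, A i 0 0 * A i 1 1 - A i 0 1 * A i 1 0 = 1) ∧
       (∀ j, A 0 j 0 * A 1 j 1 - A 0 j 1 * A 1 j 0 = 1) ∧
       (∀ k, A 0 0 k * A 1 1 k - A 0 1 k * A 1 0 k = 1) ∧
       hyperDet A = 5) := by
  -- forward form of the recurrence
  have hr : ∀ m : ℤ, F (m + 2) = F (m + 1) + F m := by
    intro m
    have h := hrec (m + 1)
    rw [show m + 1 + 1 = m + 2 by ring, show m + 1 - 1 = m by ring] at h
    exact h
  -- the alternating invariant g m = F m ^2 + F m * F (m+1) - F (m+1)^2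
  have hstep : ∀ m : ℤ, F (m + 1) ^ 2 + F (m + 1) * F (m + 2) - F (m + 2) ^ 2
      = -(F m ^ 2 + F m * F (m + 1) - F (m + 1) ^ 2) := by
    intro m; rw [hr m]; ring
  have h2 : ∀ m : ℤ, F (m + 2) ^ 2 + F (m + 2) * F (m + 3) - F (m + 3) ^ 2
      = F m ^ 2 + F m * F (m + 1) - F (m + 1) ^ 2 := by
    intro m
    have h1 := hstep (m + 1)
    rw [show m + 1 + 1 = m + 2 by ring, show m + 1 + 2 = m + 3 by ring] at h1
    rw [h1, hstep m]; ring
  have geven : ∀ k : ℤ, F (2 * k) ^ 2 + F (2 * k) * F (2 * k + 1) - F (2 * k + 1) ^ 2 = -1 := by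
    intro k
    induction k using Int.induction_on with
    | zero => simp [hF0, hF1]
    | succ k ih =>
      have h := h2 (2 * (k : ℤ))
      rw [show (2 : ℤ) * ((k : ℤ) + 1) = 2 * (k : ℤ) + 2 by ring,
        show (2 : ℤ) * (k : ℤ) + 2 + 1 = 2 * (k : ℤ) + 3 by ring, h]
      exact ih
    | pred k ih =>
      have h := h2 (2 * (-(k : ℤ) - 1))
      rw [show 2 * (-(k : ℤ) - 1) + 2 = 2 * (-(k : ℤ)) by ring,
        show 2 * (-(k : ℤ) - 1) + 3 = 2 * (-(k : ℤ)) + 1 by ring] at h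
      linarith [h, ih]
  intro n A h000 h001 h010 h100 h011 h101 h110 h111
  set x := F (2 * n - 1) with hx
  set y := F (2 * n) with hy
  -- key quadratic identity
  have key : x ^ 2 + x * y - y ^ 2 = 1 := by
    have h := hstep (2 * n - 1)
    rw [show 2 * n - 1 + 1 = 2 * n by ring, show 2 * n - 1 + 2 = 2 * n + 1 by ring] at h
    have h' := geven n
    rw [h] at h'
    linarith
  -- express neighbours in terms of x, y
  have e1 : F (2 * n + 1) = x + y := by
    have h := hr (2 * n - 1)
    rw [show 2 * n - 1 + 2 = 2 * n + 1 by ring, show 2 * n - 1 + 1 = 2 * n by ring] at h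
    linarith
  have e2 : F (2 * n + 2) = x + 2 * y := by
    have h := hr (2 * n)
    rw [show 2 * n + 2 = 2 * n + 2 by ring] at h
    rw [h, e1]; ring
  have e3 : F (2 * n + 3) = 2 * x + 3 * y := by
    have h := hr (2 * n + 1)
    rw [show 2 * n + 1 + 2 = 2 * n + 3 by ring, show 2 * n + 1 + 1 = 2 * n + 2 by ring] at h
    rw [h, e1, e2]; ring
  have e4 : F (2 * n - 2) = y - x := by
    have h := hr (2 * n - 2)
    rw [show 2 * n - 2 + 2 = 2 * n by ring, show 2 * n - 2 + 1 = 2 * n - 1 by ring] at h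
    linarith
  have e5 : F (2 * n - 3) = 2 * x - y := by
    have h := hr (2 * n - 3)
    rw [show 2 * n - 3 + 2 = 2 * n - 1 by ring, show 2 * n - 3 + 1 = 2 * n - 2 by ring] at h
    rw [e4] at h
    linarith
  rw [e5] at h000
  rw [e1] at h011 h101 h110
  rw [e3] at h111
  refine ⟨?_, ?_, ?_, ?_⟩
  · rw [Fin.forall_fin_two]
    constructor <;> simp only [h000, h001, h010, h100, h011, h101, h110, h111] <;>
      linear_combination key
  · rw [Fin.forall_fin_two]
    constructor <;> simp only [h000, h001, h010, h100, h011, h101, h110, h111] <;>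
      linear_combination key
  · rw [Fin.forall_fin_two]
    constructor <;> simp only [h000, h001, h010, h100, h011, h101, h110, h111] <;>
      linear_combination key
  · simp only [hyperDet, h000, h001, h010, h100, h011, h101, h110, h111]
    linear_combination (5 * (x ^ 2 + x * y - y ^ 2) + 5) * key
end

section
/- Let α, β, γ, δ be negative integers with δ² + 4αβγ = 1. Define g_α = gcd(α, (1-δ)/2), h_α = -gcd(α, (1+δ)/2), and similarly g_β, h_β, g_γ, h_γ. Then g_α·h_α = α, g_β·h_β = β, g_γ·h_γ = γ, g_α·g_β·g_γ = (1-δ)/2, and h_α·h_β·h_γ = (1+δ)/2. -/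
/-- Key arithmetic fact: if `a ∣ m*n` with `m,n` coprime (in ℕ), then
`gcd a m * gcd a n = a`.  This is `Nat.gcd_mul_gcd_eq_iff_dvd_mul_of_coprime`. -/
private lemma gcd_split {a m n : ℕ} (hco : Nat.Coprime m n) (hd : a ∣ m * n) :
    Nat.gcd a m * Nat.gcd a n = a :=
  (Nat.gcd_mul_gcd_eq_iff_dvd_mul_of_coprime hco).mpr hd

/-- gcd decomposition for negative α, β, γ, δ with δ² + 4αβγ = 1. -/
theorem gcd_decomposition (α β γ δ : ℤ)
    (hα : α < 0) (hβ : β < 0) (hγ : γ < 0) (hδ : δ < 0)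
    (h : δ ^ 2 + 4 * α * β * γ = 1) :
    (Int.gcd α ((1 - δ) / 2) : ℤ) * (-(Int.gcd α ((1 + δ) / 2) : ℤ)) = α ∧
    (Int.gcd β ((1 - δ) / 2) : ℤ) * (-(Int.gcd β ((1 + δ) / 2) : ℤ)) = β ∧
    (Int.gcd γ ((1 - δ) / 2) : ℤ) * (-(Int.gcd γ ((1 + δ) / 2) : ℤ)) = γ ∧
    (Int.gcd α ((1 - δ) / 2) : ℤ) * (Int.gcd β ((1 - δ) / 2) : ℤ)
        * (Int.gcd γ ((1 - δ) / 2) : ℤ) = (1 - δ) / 2 ∧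
    (-(Int.gcd α ((1 + δ) / 2) : ℤ)) * (-(Int.gcd β ((1 + δ) / 2) : ℤ))
        * (-(Int.gcd γ ((1 + δ) / 2) : ℤ)) = (1 + δ) / 2 := by
  -- δ is odd
  obtain ⟨k, hk⟩ : Odd δ := by
    rcases Int.even_or_odd δ with ⟨k, hk⟩ | ho
    · exfalso
      have h4 : (4:ℤ) ∣ 1 := by rw [← h, hk]; exact ⟨k * k + α * β * γ, by ring⟩
      norm_num at h4
    · exact ho
  set m : ℤ := (1 - δ) / 2 with hm'
  set n : ℤ := (1 + δ) / 2 with hn'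
  have hmk : m = -k := by rw [hm']; omega
  have hnk : n = k + 1 := by rw [hn']; omega
  -- basic facts
  have hmn : m * n = α * β * γ := by
    rw [hmk, hnk]; nlinarith
  have hmpos : 0 < m := by rw [hmk]; omega
  have habc : α * β * γ < 0 := by
    have : α * β > 0 := mul_pos_of_neg_of_neg hα hβ
    exact mul_neg_of_pos_of_neg this hγ
  have hnneg : n < 0 := by
    by_contra hc
    push_neg at hc
    nlinarith
  have hcopmn : Nat.Coprime m.natAbs n.natAbs := by
    have : IsCoprime m n := ⟨1, 1, by rw [hmk, hnk]; ring⟩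
    exact Int.isCoprime_iff_gcd_eq_one.mp this
  -- natAbs abbreviations
  set A := α.natAbs; set B := β.natAbs; set C := γ.natAbs
  set M := m.natAbs; set N := n.natAbs
  have hAM : (A : ℤ) = -α := Int.ofNat_natAbs_of_nonpos hα.le
  have hBM : (B : ℤ) = -β := Int.ofNat_natAbs_of_nonpos hβ.le
  have hCM : (C : ℤ) = -γ := Int.ofNat_natAbs_of_nonpos hγ.le
  have hMZ : (M : ℤ) = m := Int.natAbs_of_nonneg hmpos.le
  have hNZ : (N : ℤ) = -n := Int.ofNat_natAbs_of_nonpos hnneg.le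
  have hABC : A * B * C = M * N := by
    have : ((A * B * C : ℕ) : ℤ) = ((M * N : ℕ) : ℤ) := by
      push_cast
      rw [hAM, hBM, hCM, hMZ, hNZ]; linear_combination hmn
    exact_mod_cast this
  -- divisibility of each of A, B, C into M*N
  have hdA : A ∣ M * N := hABC ▸ ⟨B * C, by ring⟩
  have hdB : B ∣ M * N := hABC ▸ ⟨A * C, by ring⟩
  have hdC : C ∣ M * N := hABC ▸ ⟨A * B, by ring⟩
  have hga : Nat.gcd A M * Nat.gcd A N = A := gcd_split hcopmn hdA
  have hgb : Nat.gcd B M * Nat.gcd B N = B := gcd_split hcopmn hdB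
  have hgc : Nat.gcd C M * Nat.gcd C N = C := gcd_split hcopmn hdC
  -- products
  set P := Nat.gcd A M * Nat.gcd B M * Nat.gcd C M with hP
  set Q := Nat.gcd A N * Nat.gcd B N * Nat.gcd C N with hQ
  have hPQ : P * Q = M * N :=
    calc P * Q = (Nat.gcd A M * Nat.gcd A N) * (Nat.gcd B M * Nat.gcd B N)
          * (Nat.gcd C M * Nat.gcd C N) := by rw [hP, hQ]; ring
      _ = A * B * C := by rw [hga, hgb, hgc]
      _ = M * N := hABC
  have hMne : M ≠ 0 := by
    intro h0
    rw [hm'] at hMZ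
    omega
  have hNne : N ≠ 0 := by
    intro h0
    rw [hn'] at hNZ
    omega
  have hcopPN : Nat.Coprime P N :=
    Nat.Coprime.mul
      (Nat.Coprime.mul
        (Nat.Coprime.coprime_dvd_left (Nat.gcd_dvd_right A M) hcopmn)
        (Nat.Coprime.coprime_dvd_left (Nat.gcd_dvd_right B M) hcopmn))
      (Nat.Coprime.coprime_dvd_left (Nat.gcd_dvd_right C M) hcopmn)
  have hcopQM : Nat.Coprime Q M :=
    Nat.Coprime.mul
      (Nat.Coprime.mul
        (Nat.Coprime.coprime_dvd_left (Nat.gcd_dvd_right A N) hcopmn.symm)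
        (Nat.Coprime.coprime_dvd_left (Nat.gcd_dvd_right B N) hcopmn.symm))
      (Nat.Coprime.coprime_dvd_left (Nat.gcd_dvd_right C N) hcopmn.symm)
  have hPdM : P ∣ M := hcopPN.dvd_of_dvd_mul_right ⟨Q, hPQ.symm⟩
  have hQdN : Q ∣ N := hcopQM.dvd_of_dvd_mul_right ⟨P, by rw [Nat.mul_comm N M, ← hPQ]; ring⟩
  have hPM : P = M := by
    refine Nat.dvd_antisymm hPdM ?_
    have h1 : M * N ∣ P * N := by
      rw [← hPQ]
      exact mul_dvd_mul_left P hQdN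
    exact (Nat.mul_dvd_mul_iff_right (Nat.pos_of_ne_zero hNne)).mp h1
  have hQN : Q = N := by
    have := hPQ
    rw [hPM] at this
    exact Nat.eq_of_mul_eq_mul_left (Nat.pos_of_ne_zero hMne) this
  -- now translate everything back to ℤ
  have e1 : Int.gcd α m = Nat.gcd A M := rfl
  have e2 : Int.gcd α n = Nat.gcd A N := rfl
  have e3 : Int.gcd β m = Nat.gcd B M := rfl
  have e4 : Int.gcd β n = Nat.gcd B N := rfl
  have e5 : Int.gcd γ m = Nat.gcd C M := rfl
  have e6 : Int.gcd γ n = Nat.gcd C N := rfl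
  refine ⟨?_, ?_, ?_, ?_, ?_⟩
  · rw [e1, e2]
    have : ((Nat.gcd A M * Nat.gcd A N : ℕ) : ℤ) = -α := by rw [hga]; exact hAM
    push_cast at this
    linarith
  · rw [e3, e4]
    have : ((Nat.gcd B M * Nat.gcd B N : ℕ) : ℤ) = -β := by rw [hgb]; exact hBM
    push_cast at this
    linarith
  · rw [e5, e6]
    have : ((Nat.gcd C M * Nat.gcd C N : ℕ) : ℤ) = -γ := by rw [hgc]; exact hCM
    push_cast at this
    linarith
  · rw [e1, e3, e5]
    have : ((P : ℕ) : ℤ) = m := by rw [hPM]; exact hMZ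
    rw [hP] at this
    push_cast at this
    linarith
  · rw [e2, e4, e6]
    have : ((Q : ℕ) : ℤ) = -n := by rw [hQN]; exact hNZ
    rw [hQ] at this
    push_cast at this
    linarith
end

section
/- Let (a_i, b_i) for i ranging over three consecutive integers i-1, i, i+1 be vertices of a path in the Farey graph 𝓕_R, meaning a_{i-1}·b_i - b_{i-1}·a_i = R and a_i·b_{i+1} - b_i·a_{i+1} = R, where R is a nonzero integer. Let λ = (a_{i-1}·b_{i+1} - b_{i-1}·a_{i+1})/R. Then a_{i-1} + a_{i+1} = λ·a_i and b_{i-1} + b_{i+1} = λ·b_i. -/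
/-- three consecutive vertices of a path in 𝓕_R satisfy the
linear recurrence with coefficient λ = (a₋b₊ - b₋a₊)/R. -/
theorem farey_path_recurrence (R : ℤ) (hR : R ≠ 0)
    (a₀ b₀ a₁ b₁ a₂ b₂ : ℤ)
    (h1 : a₀ * b₁ - b₀ * a₁ = R) (h2 : a₁ * b₂ - b₁ * a₂ = R) :
    ((a₀ + a₂ : ℤ) : ℚ) = ((a₀ * b₂ - b₀ * a₂ : ℤ) : ℚ) / (R : ℚ) * (a₁ : ℚ) ∧
    ((b₀ + b₂ : ℤ) : ℚ) = ((a₀ * b₂ - b₀ * a₂ : ℤ) : ℚ) / (R : ℚ) * (b₁ : ℚ) := by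
  have hRq : (R : ℚ) ≠ 0 := Int.cast_ne_zero.mpr hR
  have h1q : (a₀ : ℚ) * b₁ - b₀ * a₁ = R := by exact_mod_cast congrArg (Int.cast : ℤ → ℚ) h1
  have h2q : (a₁ : ℚ) * b₂ - b₁ * a₂ = R := by exact_mod_cast congrArg (Int.cast : ℤ → ℚ) h2
  refine ⟨?_, ?_⟩ <;> push_cast <;> field_simp
  · linear_combination (-(a₀:ℚ))*h2q - a₂*h1q
  · linear_combination (-(b₀:ℚ))*h2q - b₂*h1q
end

section
/- Let N be a nonzero integer, and suppose (a_i/b_i)_{i} and (c_j/d_j)_{j} are sequences of integer pairs indexed by intervals of ℤ, such that a_{i-1}b_i - b_{i-1}a_i = R for all consecutive i and c_{j-1}d_j - d_{j-1}c_j = S for all consecutive j, where R, S are positive integers. Let K, L be nonzero integers with K > 0 and N = K²LRS, and define m_{ij} = K(a_i·d_j - L·b_i·c_j). Then every 2×2 subblock of (m_{ij}) (i.e., m_{i,j}·m_{i+1,j+1} - m_{i,j+1}·m_{i+1,j} for consecutive indices) equals N. -/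
/-- the map m_{ij} = K(a_i d_j - L b_i c_j) built from paths in
𝓕_R and 𝓕_S produces an N-tiling, N = K²LRS. -/
theorem tiling_from_paths (R S K L N : ℤ) (hR : 0 < R) (hS : 0 < S)
    (hK : 0 < K) (hL : L ≠ 0) (hN : N ≠ 0) (hNval : N = K ^ 2 * L * R * S)
    (a b c d : ℤ → ℤ)
    (hpathR : ∀ i : ℤ, a (i - 1) * b i - b (i - 1) * a i = R)
    (hpathS : ∀ j : ℤ, c (j - 1) * d j - d (j - 1) * c j = S)
    (m : ℤ → ℤ → ℤ)
    (hm : ∀ i j, m i j = K * (a i * d j - L * b i * c j)) :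
    ∀ i j : ℤ, m i j * m (i + 1) (j + 1) - m i (j + 1) * m (i + 1) j = N := by
  intro i j
  have h1 := hpathR (i + 1)
  have h2 := hpathS (j + 1)
  simp only [add_sub_cancel_right] at h1 h2
  rw [hm, hm, hm, hm, hNval]
  linear_combination (K ^ 2 * L * S) * h1 + (K ^ 2 * L * (a i * b (i + 1) - b i * a (i + 1))) * h2
end

section
/- Define φ : ℕ⁺ × ℕ⁺ → ℕ⁺ × ℕ⁺ on the set X = {(x,y) : x·y divides x² + y² + 1} by φ(x,y) = ((x²+1)/y, x). Then φ maps X to X: if x·y divides x² + y² + 1 with x, y positive, then y divides x² + 1, the quotient z = (x²+1)/y is a positive integer, and z·x divides z² + x² + 1. -/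
/-- φ(x,y) = ((x²+1)/y, x) maps X to X, where
X = {(x,y) : x·y ∣ x² + y² + 1}. -/
theorem phi_maps_X_to_X (x y : ℤ) (hx : 0 < x) (hy : 0 < y)
    (h : x * y ∣ x ^ 2 + y ^ 2 + 1) :
    y ∣ x ^ 2 + 1 ∧ 0 < (x ^ 2 + 1) / y ∧
      ((x ^ 2 + 1) / y * x) ∣ ((x ^ 2 + 1) / y) ^ 2 + x ^ 2 + 1 := by
  obtain ⟨k, hk⟩ := h
  have hyne : y ≠ 0 := hy.ne'
  have hdvd : y ∣ x ^ 2 + 1 := ⟨x * k - y, by linarith [hk]⟩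
  refine ⟨hdvd, ?_, ?_⟩
  · have hzy : (x ^ 2 + 1) / y * y = x ^ 2 + 1 := Int.ediv_mul_cancel hdvd
    have : 0 < x ^ 2 + 1 := by positivity
    nlinarith [Int.ediv_nonneg (by positivity : (0:ℤ) ≤ x ^ 2 + 1) hy.le,
      mul_pos hy (lt_of_le_of_ne (Int.ediv_nonneg (by positivity : (0:ℤ) ≤ x ^ 2 + 1) hy.le)
        (fun hzz => by rw [← hzz] at hzy; simp at hzy; nlinarith))]
  · set z := (x ^ 2 + 1) / y with hz
    have hzy : z * y = x ^ 2 + 1 := Int.ediv_mul_cancel hdvd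
    have hzval : z = k * x - y := by
      have : z * y = (k * x - y) * y := by nlinarith [hk]
      exact mul_right_cancel₀ hyne this
    exact ⟨k, by nlinarith [hzy, hzval]⟩
end
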